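/- Let A ∈ GL(n,ℝ) be such that every root λ ∈ ℂ of its characteristic polynomial satisfies |λ| = 1, and let S be a symmetric positive definite real n×n matrix; set C := A + (Aᵀ)⁻¹S. Then Y = 0 is the only symmetric real n×n matrix satisfying the fixed point equation YCY + Y(Aᵀ)⁻¹ − AY = 0. -/

import Mathlib

open Matrix Polynomial

/-- An eigenvalue of a complex matrix is a root of its characteristic polynomial. -/
lemma aux_isRoot_charpoly {n : ℕ} (M : Matrix (Fin n) (Fin n) ℂ) (μ : ℂ)
    (v : Fin n → ℂ) (hv : v ≠ 0) (h : M *ᵥ v = μ • v) : M.charpoly.IsRoot μ := by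
  have hdet : (Matrix.scalar (Fin n) μ - M).det = 0 := by
    rw [← Matrix.exists_mulVec_eq_zero_iff]
    refine ⟨v, hv, ?_⟩
    rw [Matrix.sub_mulVec, h, Matrix.scalar_apply]
    ext i
    simp [Matrix.mulVec_diagonal]
  rw [Polynomial.IsRoot, Matrix.charpoly, _root_.eval_det, Matrix.matPolyEquiv_charmatrix,
    Polynomial.eval_sub, Polynomial.eval_X, Polynomial.eval_C]
  exact hdet

/-- A real positive definite matrix, viewed as a complex matrix, has no nonzero
isotropic vector. -/
lemma aux_posdef_complex {n : ℕ} {P : Matrix (Fin n) (Fin n) ℝ} (hP : P.PosDef)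
    (y : Fin n → ℂ) (h : star y ⬝ᵥ ((P.map (algebraMap ℝ ℂ)) *ᵥ y) = 0) : y = 0 := by
  by_contra hy
  set a : Fin n → ℝ := fun i => (y i).re with ha
  set b : Fin n → ℝ := fun i => (y i).im with hb
  have hre : (star y ⬝ᵥ ((P.map (algebraMap ℝ ℂ)) *ᵥ y)).re
      = a ⬝ᵥ (P *ᵥ a) + b ⬝ᵥ (P *ᵥ b) := by
    simp only [dotProduct, Matrix.mulVec, Pi.star_apply, Matrix.map_apply,
      Complex.coe_algebraMap, Finset.mul_sum, Complex.re_sum, Complex.mul_re,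
      Complex.conj_re, Complex.conj_im, Complex.ofReal_re, Complex.ofReal_im,
      RCLike.star_def]
    simp only [Complex.mul_im]
    rw [← Finset.sum_add_distrib]
    refine Finset.sum_congr rfl fun i _ => ?_
    rw [← Finset.sum_add_distrib]
    refine Finset.sum_congr rfl fun j _ => ?_
    simp only [ha, hb, Complex.ofReal_re, Complex.ofReal_im]
    ring
  rw [h, Complex.zero_re] at hre
  have hsa : 0 ≤ a ⬝ᵥ (P *ᵥ a) := by simpa using hP.posSemidef.dotProduct_mulVec_nonneg a
  have hsb : 0 ≤ b ⬝ᵥ (P *ᵥ b) := by simpa using hP.posSemidef.dotProduct_mulVec_nonneg b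
  have hab : a ≠ 0 ∨ b ≠ 0 := by
    by_contra hc
    push_neg at hc
    apply hy
    ext i
    have h1 : (y i).re = 0 := by simpa [ha] using congrFun hc.1 i
    have h2 : (y i).im = 0 := by simpa [hb] using congrFun hc.2 i
    simp [Complex.ext_iff, h1, h2]
  rcases hab with hab | hab
  · have : 0 < a ⬝ᵥ (P *ᵥ a) := by simpa using hP.dotProduct_mulVec_pos hab
    linarith
  · have : 0 < b ⬝ᵥ (P *ᵥ b) := by simpa using hP.dotProduct_mulVec_pos hab
    linarith

theorem stmt9 (n : ℕ) (A S : Matrix (Fin n) (Fin n) ℝ)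
    (hA : IsUnit A)
    (hroots : ∀ μ : ℂ, (A.map (algebraMap ℝ ℂ)).charpoly.IsRoot μ → ‖μ‖ = 1)
    (hS : S.PosDef) :
    ∀ Y : Matrix (Fin n) (Fin n) ℝ, Y.IsSymm →
      (Y * (A + Aᵀ⁻¹ * S) * Y + Y * Aᵀ⁻¹ - A * Y = 0 ↔ Y = 0) := by
  intro Y hY
  constructor
  swap
  · rintro rfl; simp
  intro heq
  -- basic invertibility facts
  have hdetA : IsUnit A.det := (Matrix.isUnit_iff_isUnit_det A).mp hA
  have hdetAT : IsUnit Aᵀ.det := by rwa [Matrix.det_transpose]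
  have hAT : Aᵀ * Aᵀ⁻¹ = 1 := Matrix.mul_nonsing_inv _ hdetAT
  -- the matrices R and P
  set R : Matrix (Fin n) (Fin n) ℝ := (A + Aᵀ⁻¹ * S) * Y + Aᵀ⁻¹ with hR
  set P : Matrix (Fin n) (Fin n) ℝ := Aᵀ * A + S with hP
  have hSsymm : Sᵀ = S := by
    have := hS.isHermitian
    rwa [Matrix.IsHermitian, Matrix.conjTranspose_eq_transpose_of_trivial] at this
  have hPsymm : Pᵀ = P := by
    rw [hP, Matrix.transpose_add, Matrix.transpose_mul, Matrix.transpose_transpose, hSsymm]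
  have hPposdef : P.PosDef := by
    have h1 : (Aᵀ * A).PosSemidef := by
      have := Matrix.posSemidef_conjTranspose_mul_self A
      rwa [Matrix.conjTranspose_eq_transpose_of_trivial] at this
    exact Matrix.PosDef.posSemidef_add h1 hS
  -- key real identities
  have h1 : Y * (A + Aᵀ⁻¹ * S) * Y + Y * Aᵀ⁻¹ = A * Y := by rwa [sub_eq_zero] at heq
  have hYR : Y * R = A * Y := by
    rw [hR, Matrix.mul_add, ← Matrix.mul_assoc, h1]
  have hAR : Aᵀ * R = P * Y + 1 := by
    rw [hR, Matrix.mul_add, hAT, ← Matrix.mul_assoc, Matrix.mul_add, ← Matrix.mul_assoc, hAT,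
      Matrix.one_mul, hP]
  have hmain : Rᵀ * Y * R = Y + Y * P * Y := by
    have e1 : Rᵀ * Y * R = Rᵀ * (A * Y) := by rw [Matrix.mul_assoc, hYR]
    have e2 : Rᵀ * (A * Y) = (Aᵀ * R)ᵀ * Y := by
      rw [Matrix.transpose_mul, Matrix.transpose_transpose, Matrix.mul_assoc]
    rw [e1, e2, hAR, Matrix.transpose_add, Matrix.transpose_one, Matrix.transpose_mul, hPsymm,
      hY, Matrix.add_mul, Matrix.one_mul, Matrix.mul_assoc, add_comm, ← Matrix.mul_assoc]
  -- pass to complex matrices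
  set f := algebraMap ℝ ℂ with hf
  set Yc := Y.map f with hYc
  set Rc := R.map f with hRc
  set Ac := A.map f with hAc
  set Pc := P.map f with hPc
  have hconjR : (Rc)ᴴ = Rᵀ.map f := by
    ext i j
    simp [Matrix.conjTranspose_apply, hRc, Matrix.map_apply, hf, Complex.conj_ofReal]
  have hconjY : (Yc)ᴴ = Yc := by
    ext i j
    have hYij : Y j i = Y i j := by
      have := congrFun (congrFun hY i) j
      simpa [Matrix.transpose_apply] using this
    simp [Matrix.conjTranspose_apply, hYc, Matrix.map_apply, hf, Complex.conj_ofReal, hYij]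
  have hYRc : Yc * Rc = Ac * Yc := by
    rw [hYc, hRc, hAc, ← Matrix.map_mul, ← Matrix.map_mul, hYR]
  have hmainC : Rcᴴ * Yc * Rc = Yc + Yc * Pc * Yc := by
    rw [hconjR, hYc, hRc, hPc, ← Matrix.map_mul, ← Matrix.map_mul, ← Matrix.map_mul,
      ← Matrix.map_mul, hmain]
    ext i j
    simp [Matrix.map_apply, hf]
  -- the key step
  have hstep : ∀ (μ : ℂ) (w : Fin n → ℂ), Yc *ᵥ (Rc *ᵥ w) = μ • (Yc *ᵥ w) → Yc *ᵥ w = 0 := by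
    intro μ w hμ
    by_contra hne
    have heig : Ac *ᵥ (Yc *ᵥ w) = μ • (Yc *ᵥ w) := by
      rw [Matrix.mulVec_mulVec, ← hYRc, ← Matrix.mulVec_mulVec, hμ]
    have habs : ‖μ‖ = 1 := hroots μ (aux_isRoot_charpoly Ac μ _ hne heig)
    have hμμ : μ * (starRingEnd ℂ) μ = 1 := by
      rw [Complex.mul_conj, Complex.normSq_eq_norm_sq, habs]
      norm_num
    have hmove : ∀ z : Fin n → ℂ, star w ⬝ᵥ (Yc *ᵥ z) = star (Yc *ᵥ w) ⬝ᵥ z := by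
      intro z
      rw [Matrix.dotProduct_mulVec, Matrix.star_mulVec, hconjY]
    have ht : star (star w ⬝ᵥ (Yc *ᵥ w)) = star w ⬝ᵥ (Yc *ᵥ w) := by
      calc star (star w ⬝ᵥ (Yc *ᵥ w)) = star (Yc *ᵥ w) ⬝ᵥ w := (Matrix.star_dotProduct _ _).symm
        _ = star w ⬝ᵥ (Yc *ᵥ w) := (hmove w).symm
    have hs1 : star w ⬝ᵥ ((Rcᴴ * Yc * Rc) *ᵥ w) = star w ⬝ᵥ (Yc *ᵥ w) := by
      rw [← Matrix.mulVec_mulVec, ← Matrix.mulVec_mulVec]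
      rw [Matrix.dotProduct_mulVec, ← Matrix.star_mulVec, hμ, dotProduct_smul,
        Matrix.star_dotProduct, ← hmove (Rc *ᵥ w), hμ, dotProduct_smul]
      rw [smul_eq_mul, smul_eq_mul, star_mul', ht]
      rw [← mul_assoc]
      have : star μ = (starRingEnd ℂ) μ := rfl
      rw [this, mul_comm μ _, mul_comm ((starRingEnd ℂ) μ) μ, hμμ, one_mul]
    have hs2 : star w ⬝ᵥ ((Rcᴴ * Yc * Rc) *ᵥ w)
        = star w ⬝ᵥ (Yc *ᵥ w) + star (Yc *ᵥ w) ⬝ᵥ (Pc *ᵥ (Yc *ᵥ w)) := by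
      rw [hmainC, Matrix.add_mulVec, dotProduct_add]
      rw [add_right_inj]
      rw [← Matrix.mulVec_mulVec, ← Matrix.mulVec_mulVec, hmove]
    have hq : star (Yc *ᵥ w) ⬝ᵥ (Pc *ᵥ (Yc *ᵥ w)) = 0 := by
      have := hs1.symm.trans hs2
      exact (left_eq_add.mp this)
    exact hne (aux_posdef_complex hPposdef (Yc *ᵥ w) hq)
  -- multiset induction over linear factors of the characteristic polynomial of Rc
  have hind : ∀ s : Multiset ℂ, ∀ w : Fin n → ℂ,
      (Polynomial.aeval Rc (s.map fun μ => X - C μ).prod) *ᵥ w = 0 → Yc *ᵥ w = 0 := by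
    intro s
    induction s using Multiset.induction_on with
    | empty =>
      intro w hw
      simp only [Multiset.map_zero, Multiset.prod_zero, _root_.map_one, Matrix.one_mulVec] at hw
      rw [hw, Matrix.mulVec_zero]
    | cons μ s ih =>
      intro w hw
      rw [Multiset.map_cons, Multiset.prod_cons, mul_comm, _root_.map_mul, ← Matrix.mulVec_mulVec] at hw
      have h2 := ih _ hw
      have h3 : (Polynomial.aeval Rc (X - C μ)) *ᵥ w = Rc *ᵥ w - μ • w := by
        rw [map_sub, Polynomial.aeval_X, Polynomial.aeval_C, Matrix.sub_mulVec,
          Algebra.algebraMap_eq_smul_one, Matrix.smul_mulVec, Matrix.one_mulVec]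
      rw [h3, Matrix.mulVec_sub, Matrix.mulVec_smul, sub_eq_zero] at h2
      exact hstep μ w h2
  -- conclude
  have hYc0 : Yc = 0 := by
    have hsplit : Rc.charpoly = (Rc.charpoly.roots.map fun a => X - C a).prod :=
      Polynomial.Splits.eq_prod_roots_of_monic (IsAlgClosed.splits Rc.charpoly)
        Rc.charpoly_monic
    have hC : Polynomial.aeval Rc Rc.charpoly = 0 := Matrix.aeval_self_charpoly Rc
    have hall : ∀ w : Fin n → ℂ, Yc *ᵥ w = 0 := by
      intro w
      refine hind Rc.charpoly.roots w ?_
      rw [← hsplit, hC, Matrix.zero_mulVec]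
    ext i j
    have := congrFun (hall (Pi.single j 1)) i
    simpa [Matrix.mulVec_single] using this
  ext i j
  have : (Y i j : ℂ) = 0 := by
    have := congrFun (congrFun hYc0 i) j
    simpa [hYc, Matrix.map_apply, hf, Complex.coe_algebraMap] using this
  exact_mod_cast this
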